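/- The only graph automorphism of the graph 12⁸₂ is the identity. -/

import Mathlib

/-- The vertices of the graph `12⁸₂`. -/
inductive V82 : Type
  | a1 | a2 | a3 | b1 | b2 | b3 | v | w
  deriving DecidableEq

instance : Fintype V82 :=
  ⟨{V82.a1, V82.a2, V82.a3, V82.b1, V82.b2, V82.b3, V82.v, V82.w},
    fun x => by cases x <;> first | decide | simp⟩

open V82 in
/-- The graph `12⁸₂`: the path `a₂a₃b₁b₂b₃a₁` (the 6-cycle minus the edge `a₁a₂`,
which arises through the degree-2 vertex `w`), the chords `a₂b₂`, `a₃b₃`, the edges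
`va₁`, `vb₁`, `vb₂` and the edges `wa₁`, `wa₂` (12 edges in all); `b₂` is the unique
degree-4 vertex and `w` the unique degree-2 vertex. -/
def graph1282 : SimpleGraph V82 :=
  SimpleGraph.fromRel (fun x y => (x, y) ∈
    [(a2, a3), (a3, b1), (b1, b2), (b2, b3), (b3, a1),
     (a2, b2), (a3, b3), (v, a1), (v, b1), (v, b2), (w, a1), (w, a2)])

instance : DecidableRel graph1282.Adj := fun x y => by
  unfold graph1282
  rw [SimpleGraph.fromRel_adj]
  infer_instance

open V82 in
/-- The only graph automorphism of `12⁸₂` is the identity. -/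
theorem stmt13 (φ : graph1282 ≃g graph1282) : ∀ x, φ x = x := by
  have hAdj : ∀ x y, graph1282.Adj (φ x) (φ y) ↔ graph1282.Adj x y := fun x y => φ.map_adj_iff
  have hdeg : ∀ x, graph1282.degree (φ x) = graph1282.degree x := fun x => by
    rw [← SimpleGraph.card_neighborSet_eq_degree, ← SimpleGraph.card_neighborSet_eq_degree]
    exact Fintype.card_congr (φ.mapNeighborSet x).symm
  have hinj : Function.Injective φ := φ.toEquiv.injective
  have hw : φ w = w := by
    have h2 : ∀ x : V82, graph1282.degree x = 2 → x = w := by decide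
    exact h2 _ (by rw [hdeg w]; decide)
  have hb2 : φ b2 = b2 := by
    have h4 : ∀ x : V82, graph1282.degree x = 4 → x = b2 := by decide
    exact h4 _ (by rw [hdeg b2]; decide)
  have ha2 : φ a2 = a2 := by
    have h : ∀ x : V82, graph1282.Adj w x → graph1282.Adj b2 x → x = a2 := by decide
    exact h _ (hw ▸ (hAdj w a2).mpr (by decide)) (hb2 ▸ (hAdj b2 a2).mpr (by decide))
  have ha1 : φ a1 = a1 := by
    have h : ∀ x : V82, graph1282.Adj w x → x ≠ a2 → x = a1 := by decide
    exact h _ (hw ▸ (hAdj w a1).mpr (by decide))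
      (fun e => by exact absurd (hinj (e.trans ha2.symm)) (by decide))
  have ha3 : φ a3 = a3 := by
    have h : ∀ x : V82, graph1282.Adj a2 x → x ≠ b2 → x ≠ w → x = a3 := by decide
    exact h _ (ha2 ▸ (hAdj a2 a3).mpr (by decide))
      (fun e => by exact absurd (hinj (e.trans hb2.symm)) (by decide))
      (fun e => by exact absurd (hinj (e.trans hw.symm)) (by decide))
  have hb3 : φ b3 = b3 := by
    have h : ∀ x : V82, graph1282.Adj a1 x → graph1282.Adj a3 x → x = b3 := by decide
    exact h _ (ha1 ▸ (hAdj a1 b3).mpr (by decide)) (ha3 ▸ (hAdj a3 b3).mpr (by decide))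
  have hb1 : φ b1 = b1 := by
    have h : ∀ x : V82, graph1282.Adj a3 x → x ≠ a2 → x ≠ b3 → x = b1 := by decide
    exact h _ (ha3 ▸ (hAdj a3 b1).mpr (by decide))
      (fun e => by exact absurd (hinj (e.trans ha2.symm)) (by decide))
      (fun e => by exact absurd (hinj (e.trans hb3.symm)) (by decide))
  have hv : φ v = v := by
    have h : ∀ x : V82, graph1282.Adj a1 x → x ≠ b3 → x ≠ w → x = v := by decide
    exact h _ (ha1 ▸ (hAdj a1 v).mpr (by decide))
      (fun e => by exact absurd (hinj (e.trans hb3.symm)) (by decide))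
      (fun e => by exact absurd (hinj (e.trans hw.symm)) (by decide))
  intro x
  cases x <;> assumption
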